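/- arXiv:math/0307352 — 2 statements merged into one kernel-verified Lean document; each statement's English description precedes it below -/
import Mathlib

section
/- For every positive integer m and real s > 1, Σ_{n=1}^{∞} c_n(m)/n^s = σ_{1-s}(m)/ζ(s), where σ_{1-s}(m) = Σ_{d|m} d^{1-s}. -/
open Finset Complex ArithmeticFunction

noncomputable def ramanujanSum (n m : ℕ) : ℂ :=
  ∑ k ∈ (Finset.Icc 1 n).filter (fun k => Nat.Coprime k n),
    Complex.exp (2 * Real.pi * Complex.I * m * k / n)

lemma exp_sum_eq (m q : ℕ) (hq : 0 < q) :
    ∑ j ∈ Finset.Icc 1 q, Complex.exp (2 * Real.pi * Complex.I * m * j / q) =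
      if q ∣ m then (q : ℂ) else 0 := by
  have hq' : (q : ℂ) ≠ 0 := Nat.cast_ne_zero.mpr hq.ne'
  set z : ℂ := Complex.exp (2 * Real.pi * Complex.I * m / q) with hz_def
  have hterm : ∀ j : ℕ, Complex.exp (2 * Real.pi * Complex.I * m * j / q) = z ^ j := by
    intro j
    rw [hz_def, ← Complex.exp_nat_mul]
    congr 1
    field_simp
  have hzq : z ^ q = 1 := by
    rw [hz_def, ← Complex.exp_nat_mul]
    have h1 : (q : ℂ) * (2 * Real.pi * Complex.I * m / q) = m * (2 * Real.pi * Complex.I) := by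
      field_simp
    rw [h1]
    exact Complex.exp_nat_mul_two_pi_mul_I m
  by_cases h : q ∣ m
  · obtain ⟨c, rfl⟩ := h
    have hz1 : z = 1 := by
      rw [hz_def]
      have h1 : 2 * (Real.pi : ℂ) * Complex.I * (↑(q * c)) / q = c * (2 * Real.pi * Complex.I) := by
        push_cast
        field_simp
      rw [h1]
      exact Complex.exp_nat_mul_two_pi_mul_I c
    simp only [hterm, hz1, one_pow, Finset.sum_const, Nat.card_Icc, if_pos (⟨c, rfl⟩ : q ∣ q * c)]
    simp
  · have hz1 : z ≠ 1 := by
      intro hz1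
      rw [hz_def, Complex.exp_eq_one_iff] at hz1
      obtain ⟨k, hk⟩ := hz1
      have h2pi : (2 * (Real.pi : ℂ) * Complex.I) ≠ 0 := by
        simp [Real.pi_ne_zero, Complex.I_ne_zero]
      rw [div_eq_iff hq'] at hk
      have hm : (m : ℂ) = ↑k * ↑q := by
        apply mul_left_cancel₀ h2pi
        linear_combination hk
      have hmz : (m : ℤ) = q * k := by exact_mod_cast hm.trans (mul_comm _ _)
      exact h (Int.natCast_dvd_natCast.mp ⟨k, hmz⟩)
    rw [if_neg h]
    calc ∑ j ∈ Finset.Icc 1 q, Complex.exp (2 * Real.pi * Complex.I * m * j / q)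
        = ∑ j ∈ Finset.range q, z ^ (1 + j) := by
          rw [← Finset.Ico_add_one_right_eq_Icc, Finset.sum_Ico_eq_sum_range]
          simp only [hterm, Nat.succ_sub_one, Nat.add_sub_cancel]
      _ = z * ∑ j ∈ Finset.range q, z ^ j := by
          rw [Finset.mul_sum]
          exact Finset.sum_congr rfl fun j _ => by rw [pow_add, pow_one]
      _ = 0 := by rw [geom_sum_eq hz1, hzq]; simp


lemma ramanujanSum_eq (m n : ℕ) (hn : 0 < n) :
    ramanujanSum n m = ∑ d ∈ n.divisors,
      ((moebius (n / d) : ℤ) : ℂ) * (if d ∣ m then (d : ℂ) else 0) := by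
  have hn' : n ≠ 0 := hn.ne'
  -- indicator
  have ind : ∀ k ∈ Finset.Icc 1 n,
      (∑ d ∈ n.divisors, if d ∣ k then ((moebius d : ℤ) : ℂ) else 0) =
        if Nat.Coprime k n then 1 else 0 := by
    intro k hk
    have hk1 : k ≠ 0 := by have := (Finset.mem_Icc.mp hk).1; omega
    have hset : n.divisors.filter (· ∣ k) = (Nat.gcd k n).divisors := by
      ext d
      simp only [Finset.mem_filter, Nat.mem_divisors, Nat.dvd_gcd_iff]
      constructor
      · rintro ⟨⟨h1, _⟩, h2⟩
        exact ⟨⟨h2, h1⟩, Nat.gcd_ne_zero_left hk1⟩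
      · rintro ⟨⟨h1, h2⟩, _⟩
        exact ⟨⟨h2, hn'⟩, h1⟩
    rw [← Finset.sum_filter, hset]
    have h2 : ∑ d ∈ (Nat.gcd k n).divisors, moebius d = if Nat.gcd k n = 1 then 1 else 0 := by
      rw [← ArithmeticFunction.coe_mul_zeta_apply, ArithmeticFunction.moebius_mul_coe_zeta,
        ArithmeticFunction.one_apply]
    have : ((∑ d ∈ (Nat.gcd k n).divisors, moebius d : ℤ) : ℂ)
        = if Nat.Coprime k n then 1 else 0 := by
      rw [h2]
      unfold Nat.Coprime
      split <;> simp
    rw [← this]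
    push_cast
    rfl
  -- main computation
  calc ramanujanSum n m
      = ∑ k ∈ Finset.Icc 1 n, if Nat.Coprime k n then
          Complex.exp (2 * Real.pi * Complex.I * m * k / n) else 0 := by
        rw [ramanujanSum, Finset.sum_filter]
    _ = ∑ k ∈ Finset.Icc 1 n, ∑ d ∈ n.divisors,
          (if d ∣ k then ((moebius d : ℤ) : ℂ) else 0) *
            Complex.exp (2 * Real.pi * Complex.I * m * k / n) := by
        refine Finset.sum_congr rfl fun k hk => ?_
        rw [← Finset.sum_mul, ind k hk]
        split <;> simp
    _ = ∑ d ∈ n.divisors, ∑ k ∈ Finset.Icc 1 n,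
          (if d ∣ k then ((moebius d : ℤ) : ℂ) else 0) *
            Complex.exp (2 * Real.pi * Complex.I * m * k / n) := Finset.sum_comm
    _ = ∑ d ∈ n.divisors, ((moebius d : ℤ) : ℂ) *
          (if (n / d) ∣ m then ((n / d : ℕ) : ℂ) else 0) := by
        refine Finset.sum_congr rfl fun d hd => ?_
        obtain ⟨hdn, -⟩ := Nat.mem_divisors.mp hd
        have hd0 : 0 < d := Nat.pos_of_mem_divisors hd
        have hnd0 : 0 < n / d := Nat.div_pos (Nat.le_of_dvd hn hdn) hd0
        have step : ∑ k ∈ Finset.Icc 1 n,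
            (if d ∣ k then ((moebius d : ℤ) : ℂ) else 0) *
              Complex.exp (2 * Real.pi * Complex.I * m * k / n)
            = ((moebius d : ℤ) : ℂ) * ∑ k ∈ (Finset.Icc 1 n).filter (d ∣ ·),
              Complex.exp (2 * Real.pi * Complex.I * m * k / n) := by
          rw [Finset.mul_sum, Finset.sum_filter]
          refine Finset.sum_congr rfl fun k _ => ?_
          split <;> simp
        rw [step]
        congr 1
        have reindex : ∑ k ∈ (Finset.Icc 1 n).filter (d ∣ ·),
            Complex.exp (2 * Real.pi * Complex.I * m * k / n)
            = ∑ j ∈ Finset.Icc 1 (n / d),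
              Complex.exp (2 * Real.pi * Complex.I * m * j / (n / d : ℕ)) := by
          refine Finset.sum_nbij' (fun k => k / d) (fun j => d * j) ?_ ?_ ?_ ?_ ?_
          · intro k hk
            simp only [Finset.mem_filter, Finset.mem_Icc] at hk
            obtain ⟨⟨hk1, hk2⟩, hdk⟩ := hk
            simp only [Finset.mem_Icc]
            constructor
            · exact Nat.one_le_div_iff hd0 |>.mpr (Nat.le_of_dvd (by omega) hdk)
            · exact Nat.div_le_div_right hk2
          · intro j hj
            simp only [Finset.mem_Icc] at hj
            simp only [Finset.mem_filter, Finset.mem_Icc]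
            refine ⟨⟨by nlinarith [hj.1], ?_⟩, Dvd.intro j rfl⟩
            calc d * j ≤ d * (n / d) := Nat.mul_le_mul_left d hj.2
              _ = n := Nat.mul_div_cancel' hdn
          · intro k hk
            simp only [Finset.mem_filter] at hk
            exact Nat.mul_div_cancel' hk.2
          · intro j hj
            exact Nat.mul_div_cancel_left j hd0
          · intro k hk
            simp only [Finset.mem_filter, Finset.mem_Icc] at hk
            obtain ⟨⟨hk1, hk2⟩, c, rfl⟩ := hk
            have hc : (d * c) / d = c := Nat.mul_div_cancel_left c hd0
            congr 1
            rw [hc]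
            have hcast : ((n / d : ℕ) : ℂ) = (n : ℂ) / d := by
              rw [Nat.cast_div hdn (by exact_mod_cast hd0.ne')]
            rw [hcast]
            have hdC : (d : ℂ) ≠ 0 := by exact_mod_cast hd0.ne'
            have hnC : (n : ℂ) ≠ 0 := by exact_mod_cast hn'
            push_cast
            field_simp
        rw [reindex, exp_sum_eq m (n / d) hnd0]
    _ = ∑ d ∈ n.divisors,
          ((moebius (n / d) : ℤ) : ℂ) * (if d ∣ m then (d : ℂ) else 0) := by
        have key := Nat.sum_div_divisors n
          (fun e => ((moebius (n / e) : ℤ) : ℂ) * (if e ∣ m then (e : ℂ) else 0))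
        rw [← key]
        refine Finset.sum_congr rfl fun d hd => ?_
        obtain ⟨hdn, -⟩ := Nat.mem_divisors.mp hd
        rw [Nat.div_div_self hdn hn']

theorem ramanujanSum_dirichlet_series (m : ℕ) (hm : 0 < m) (s : ℝ) (hs : 1 < s) :
    ∑' n : ℕ, ramanujanSum (n + 1) m / ((n + 1 : ℕ) : ℂ) ^ (s : ℂ) =
      (∑ d ∈ m.divisors, (d : ℂ) ^ ((1 : ℂ) - (s : ℂ))) / riemannZeta s := by
  have hm' : m ≠ 0 := hm.ne'
  have hs1 : 1 < ((s : ℂ)).re := by simpa using hs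
  have hμ : LSeriesSummable (fun n => ((moebius n : ℤ) : ℂ)) s :=
    ArithmeticFunction.LSeriesSummable_moebius_iff.mpr hs1
  have hz : riemannZeta s ≠ 0 := riemannZeta_ne_zero_of_one_lt_re hs1
  have hLμ : LSeries (fun n => ((moebius n : ℤ) : ℂ)) s = (riemannZeta s)⁻¹ := by
    have h1 := ArithmeticFunction.LSeries_zeta_mul_Lseries_moebius hs1
    have h2 := ArithmeticFunction.LSeries_zeta_eq_riemannZeta hs1
    rw [h2] at h1
    rw [inv_eq_one_div, eq_div_iff hz, mul_comm]
    exact h1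
  set F : ℕ → ℕ → ℂ := fun d n =>
    if d ∣ n then ((moebius (n / d) : ℤ) : ℂ) * d / ((n : ℕ) : ℂ) ^ (s : ℂ) else 0 with hF
  -- step 1 : pointwise identity
  have step1 : ∀ n : ℕ, ramanujanSum (n + 1) m / ((n + 1 : ℕ) : ℂ) ^ (s : ℂ)
      = ∑ d ∈ m.divisors, F d (n + 1) := by
    intro n
    have hsets : (n + 1).divisors.filter (· ∣ m) = m.divisors.filter (· ∣ (n + 1)) := by
      ext d
      simp only [Finset.mem_filter, Nat.mem_divisors]
      constructor
      · rintro ⟨⟨h1, -⟩, h2⟩; exact ⟨⟨h2, hm'⟩, h1⟩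
      · rintro ⟨⟨h1, -⟩, h2⟩; exact ⟨⟨h2, Nat.succ_ne_zero n⟩, h1⟩
    rw [ramanujanSum_eq m (n + 1) (Nat.succ_pos n), Finset.sum_div]
    calc ∑ d ∈ (n + 1).divisors,
          ((moebius ((n + 1) / d) : ℤ) : ℂ) * (if d ∣ m then (d : ℂ) else 0)
            / ((n + 1 : ℕ) : ℂ) ^ (s : ℂ)
        = ∑ d ∈ (n + 1).divisors, (if d ∣ m then
            ((moebius ((n + 1) / d) : ℤ) : ℂ) * d / ((n + 1 : ℕ) : ℂ) ^ (s : ℂ) else 0) := by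
          refine Finset.sum_congr rfl fun d _ => ?_
          split <;> simp
      _ = ∑ d ∈ (n + 1).divisors.filter (· ∣ m),
            ((moebius ((n + 1) / d) : ℤ) : ℂ) * d / ((n + 1 : ℕ) : ℂ) ^ (s : ℂ) := by
          rw [Finset.sum_filter]
      _ = ∑ d ∈ m.divisors.filter (· ∣ (n + 1)),
            ((moebius ((n + 1) / d) : ℤ) : ℂ) * d / ((n + 1 : ℕ) : ℂ) ^ (s : ℂ) := by
          rw [hsets]
      _ = ∑ d ∈ m.divisors, F d (n + 1) := by
          rw [Finset.sum_filter]
  -- per-divisor analysis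
  have perd : ∀ d ∈ m.divisors,
      Summable (fun n => F d (n + 1)) ∧
        ∑' n : ℕ, F d (n + 1) = (d : ℂ) ^ ((1 : ℂ) - (s : ℂ)) * (riemannZeta s)⁻¹ := by
    intro d hd
    have hd0 : 0 < d := Nat.pos_of_mem_divisors hd
    have hdC : (d : ℂ) ≠ 0 := Nat.cast_ne_zero.mpr hd0.ne'
    set i : ℕ → ℕ := fun e => d * (e + 1) - 1 with hi
    have hge : ∀ e, 1 ≤ d * (e + 1) := fun e =>
      Nat.one_le_iff_ne_zero.mpr (Nat.mul_ne_zero hd0.ne' (Nat.succ_ne_zero e))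
    have hi_inj : Function.Injective i := by
      intro a b hab
      simp only [hi] at hab
      have ha := hge a
      have hb := hge b
      have : d * (a + 1) = d * (b + 1) := by omega
      have := Nat.eq_of_mul_eq_mul_left hd0 this
      omega
    have hsupp : Function.support (fun n => F d (n + 1)) ⊆ Set.range i := by
      intro n hne
      simp only [Function.mem_support, hF] at hne
      by_cases hdvd : d ∣ (n + 1)
      · obtain ⟨c, hc⟩ := hdvd
        have hc1 : 1 ≤ c := by
          rcases Nat.eq_zero_or_pos c with h0 | h1
          · subst h0; simp at hc
          · exact h1
        refine ⟨c - 1, ?_⟩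
        simp only [hi]
        have h2 : c - 1 + 1 = c := by omega
        rw [h2, ← hc]
        omega
      · rw [if_neg hdvd] at hne
        exact absurd rfl hne
    -- value along the injection
    have hval : ∀ e : ℕ, F d (i e + 1)
        = ((d : ℂ) / (d : ℂ) ^ (s : ℂ)) *
            LSeries.term (fun n => ((moebius n : ℤ) : ℂ)) s (e + 1) := by
      intro e
      have hie : i e + 1 = d * (e + 1) := by simp only [hi]; have := hge e; omega
      rw [hie, hF]
      simp only []
      rw [if_pos (Dvd.intro (e + 1) rfl)]
      rw [Nat.mul_div_cancel_left (e + 1) hd0]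
      rw [LSeries.term_of_ne_zero (Nat.succ_ne_zero e)]
      rw [Nat.cast_mul, Complex.natCast_mul_natCast_cpow]
      ring
    have hterm_sum : Summable (fun e : ℕ =>
        LSeries.term (fun n => ((moebius n : ℤ) : ℂ)) s (e + 1)) :=
      hμ.comp_injective (add_left_injective 1)
    have hcomp_sum : Summable (fun e : ℕ => F d (i e + 1)) := by
      simp only [hval]
      exact hterm_sum.mul_left _
    have hsum : Summable (fun n => F d (n + 1)) := by
      rw [← Function.Injective.summable_iff hi_inj (fun x hx => ?_)]
      · exact hcomp_sum
      · by_contra hne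
        exact hx (hsupp hne)
    refine ⟨hsum, ?_⟩
    have htsum : ∑' n : ℕ, F d (n + 1) = ∑' e : ℕ, F d (i e + 1) :=
      (Function.Injective.tsum_eq hi_inj hsupp).symm
    rw [htsum]
    simp only [hval]
    rw [tsum_mul_left]
    have hshift : ∑' e : ℕ, LSeries.term (fun n => ((moebius n : ℤ) : ℂ)) s (e + 1)
        = LSeries (fun n => ((moebius n : ℤ) : ℂ)) s := by
      have h0 := Summable.tsum_eq_zero_add hμ
      rw [LSeries]
      rw [h0, LSeries.term_zero, zero_add]
    rw [hshift, hLμ]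
    congr 1
    rw [Complex.cpow_sub _ _ hdC, Complex.cpow_one]
  calc ∑' n : ℕ, ramanujanSum (n + 1) m / ((n + 1 : ℕ) : ℂ) ^ (s : ℂ)
      = ∑' n : ℕ, ∑ d ∈ m.divisors, F d (n + 1) := tsum_congr step1
    _ = ∑ d ∈ m.divisors, ∑' n : ℕ, F d (n + 1) :=
        Summable.tsum_finsetSum fun d hd => (perd d hd).1
    _ = ∑ d ∈ m.divisors, (d : ℂ) ^ ((1 : ℂ) - (s : ℂ)) * (riemannZeta s)⁻¹ :=
        Finset.sum_congr rfl fun d hd => (perd d hd).2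
    _ = (∑ d ∈ m.divisors, (d : ℂ) ^ ((1 : ℂ) - (s : ℂ))) / riemannZeta s := by
        rw [← Finset.sum_mul, div_eq_mul_inv]
end

section
/- For a fixed positive integer n, Σ_{m=1}^{∞} c_n(m)/m^s = ζ(s)·Σ_{d|n} μ(n/d)·d^{1-s}, for real s > 1. -/
open ArithmeticFunction

open Complex Finset

lemma exp_sum_Icc (N m : ℕ) (hN : 0 < N) :
    ∑ j ∈ Finset.Icc 1 N, Complex.exp (2 * Real.pi * Complex.I * m * j / N)
      = if N ∣ m then (N : ℂ) else 0 := by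
  have hN0 : (N : ℂ) ≠ 0 := Nat.cast_ne_zero.mpr hN.ne'
  set z : ℂ := Complex.exp (2 * Real.pi * Complex.I * m / N) with hz
  have hterm : ∀ j : ℕ, Complex.exp (2 * Real.pi * Complex.I * m * j / N) = z ^ j := by
    intro j
    rw [hz, ← Complex.exp_nat_mul]
    ring_nf
  have hzN : z ^ N = 1 := by
    rw [hz, ← Complex.exp_nat_mul]
    have h1 : (N : ℂ) * (2 * Real.pi * Complex.I * m / N) = (m : ℤ) * (2 * Real.pi * Complex.I) := by
      push_cast; field_simp
    rw [h1, Complex.exp_int_mul_two_pi_mul_I]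
  by_cases hd : N ∣ m
  · have hz1 : z = 1 := by
      obtain ⟨c, rfl⟩ := hd
      rw [hz]
      have h1 : 2 * Real.pi * Complex.I * (↑(N * c)) / N = (c : ℤ) * (2 * Real.pi * Complex.I) := by
        push_cast; field_simp
      rw [h1, Complex.exp_int_mul_two_pi_mul_I]
    simp [hterm, hz1, hd, Nat.card_Icc]
  · have hz1 : z ≠ 1 := by
      intro h
      rw [hz, Complex.exp_eq_one_iff] at h
      obtain ⟨k, hk⟩ := h
      have h2 : (2 * Real.pi * Complex.I) * (m : ℂ) = (2 * Real.pi * Complex.I) * ((k : ℂ) * N) := by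
        field_simp at hk
        linear_combination (2 * Real.pi * Complex.I) * hk
      have h3 : (m : ℂ) = (k : ℂ) * N := mul_left_cancel₀ Complex.two_pi_I_ne_zero h2
      have hm : (m : ℤ) = k * N := by exact_mod_cast h3
      have : (N : ℤ) ∣ (m : ℤ) := ⟨k, by linarith⟩
      exact hd (Int.natCast_dvd_natCast.mp this)
    simp only [hterm, if_neg hd]
    have : ∑ j ∈ Finset.Icc 1 N, z ^ j = z * ∑ j ∈ Finset.range N, z ^ j := by
      rw [Finset.mul_sum]
      rw [show Finset.Icc 1 N = Finset.Icc (0+1) ((N-1)+1) by congr 1; omega]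
      rw [← Finset.map_add_right_Icc, Finset.sum_map]
      rw [show Finset.Icc 0 (N-1) = Finset.range N by
        rw [← Finset.Ico_add_one_right_eq_Icc]; rw [show N-1+1 = N from by omega, ← Finset.range_eq_Ico]]
      apply Finset.sum_congr rfl
      intro j _
      simp [pow_succ, mul_comm]
    rw [this, geom_sum_eq hz1, hzN]
    simp

lemma moebius_indicator (k n : ℕ) (hn : 0 < n) :
    (if Nat.Coprime k n then (1 : ℂ) else 0)
      = ∑ d ∈ n.divisors, (if d ∣ k then (moebius d : ℂ) else 0) := by
  have h1 : ∑ d ∈ n.divisors, (if d ∣ k then (moebius d : ℂ) else 0)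
      = ∑ d ∈ (Nat.gcd k n).divisors, (moebius d : ℂ) := by
    rw [← Finset.sum_filter]
    congr 1
    ext d
    simp only [Finset.mem_filter, Nat.mem_divisors, Nat.dvd_gcd_iff]
    constructor
    · rintro ⟨⟨h1, h2⟩, h3⟩; exact ⟨⟨h3, h1⟩, Nat.gcd_ne_zero_right h2⟩
    · rintro ⟨⟨h1, h2⟩, h3⟩; exact ⟨⟨h2, hn.ne'⟩, h1⟩
  rw [h1]
  have this : (∑ d ∈ (Nat.gcd k n).divisors, moebius d : ℤ) = if Nat.gcd k n = 1 then 1 else 0 := by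
    have h := ArithmeticFunction.moebius_mul_coe_zeta
    have h2 := congrArg (fun f : ArithmeticFunction ℤ => f (Nat.gcd k n)) h
    simpa only [ArithmeticFunction.coe_mul_zeta_apply, ArithmeticFunction.one_apply] using h2
  have h2 : ((∑ d ∈ (Nat.gcd k n).divisors, moebius d : ℤ) : ℂ)
      = ((if Nat.gcd k n = 1 then (1:ℤ) else 0 : ℤ) : ℂ) := by rw [this]
  push_cast at h2
  rw [h2]


lemma ramanujanSum_eq_sum (n : ℕ) (hn : 0 < n) (m : ℕ) :
    ramanujanSum n m
      = ∑ d ∈ n.divisors, (if d ∣ m then (moebius (n / d) : ℂ) * d else 0) := by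
  unfold ramanujanSum
  rw [Finset.sum_filter]
  have step1 : ∀ k ∈ Finset.Icc 1 n,
      (if Nat.Coprime k n then Complex.exp (2 * Real.pi * Complex.I * m * k / n) else 0)
        = ∑ d ∈ n.divisors, (if d ∣ k then (moebius d : ℂ) else 0)
            * Complex.exp (2 * Real.pi * Complex.I * m * k / n) := by
    intro k _
    rw [← Finset.sum_mul, ← moebius_indicator k n hn]
    split <;> simp
  rw [Finset.sum_congr rfl step1, Finset.sum_comm]
  have step2 : ∀ d ∈ n.divisors,
      ∑ k ∈ Finset.Icc 1 n, (if d ∣ k then (moebius d : ℂ) else 0)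
          * Complex.exp (2 * Real.pi * Complex.I * m * k / n)
        = (moebius d : ℂ) * (if (n / d) ∣ m then ((n / d : ℕ) : ℂ) else 0) := by
    intro d hd
    obtain ⟨hdn, hn0⟩ := Nat.mem_divisors.mp hd
    have hd0 : 0 < d := Nat.pos_of_dvd_of_pos hdn hn
    have hnd0 : 0 < n / d := Nat.div_pos (Nat.le_of_dvd hn hdn) hd0
    have hmul : d * (n / d) = n := Nat.mul_div_cancel' hdn
    simp only [ite_mul, zero_mul]
    rw [← Finset.sum_filter]
    rw [← exp_sum_Icc (n / d) m hnd0, Finset.mul_sum]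
    apply Finset.sum_nbij' (i := fun k => k / d) (j := fun j => d * j)
    · intro k hk
      simp only [Finset.mem_filter, Finset.mem_Icc] at hk ⊢
      obtain ⟨⟨h1, h2⟩, h3⟩ := hk
      obtain ⟨c, rfl⟩ := h3
      rw [Nat.mul_div_cancel_left _ hd0]
      constructor
      · rcases Nat.eq_zero_or_pos c with rfl | hc
        · simp at h1
        · exact hc
      · exact (Nat.le_div_iff_mul_le hd0).mpr (by rw [mul_comm]; exact h2)
    · intro j hj
      simp only [Finset.mem_filter, Finset.mem_Icc] at hj ⊢
      obtain ⟨h1, h2⟩ := hj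
      refine ⟨⟨Nat.mul_pos hd0 h1, ?_⟩, Dvd.intro _ rfl⟩
      calc d * j ≤ d * (n / d) := Nat.mul_le_mul_left d h2
        _ = n := hmul
    · intro k hk
      simp only [Finset.mem_filter] at hk
      exact Nat.mul_div_cancel' hk.2
    · intro j hj
      exact Nat.mul_div_cancel_left _ hd0
    · intro k hk
      simp only [Finset.mem_filter, Finset.mem_Icc] at hk
      obtain ⟨⟨h1, h2⟩, c, rfl⟩ := hk
      rw [Nat.mul_div_cancel_left _ hd0]
      congr 1
      have hnC : (n : ℂ) = (d : ℂ) * ((n / d : ℕ) : ℂ) := by exact_mod_cast congrArg (Nat.cast : ℕ → ℂ) hmul.symm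
      have hdC : (d : ℂ) ≠ 0 := Nat.cast_ne_zero.mpr hd0.ne'
      have hndC : ((n / d : ℕ) : ℂ) ≠ 0 := Nat.cast_ne_zero.mpr hnd0.ne'
      rw [hnC]
      push_cast
      field_simp
  rw [Finset.sum_congr rfl step2]
  have step3 : ∑ d ∈ n.divisors, (moebius d : ℂ) * (if (n / d) ∣ m then ((n / d : ℕ) : ℂ) else 0)
      = ∑ d ∈ n.divisors, (moebius (n / d) : ℂ) * (if d ∣ m then ((d : ℕ) : ℂ) else 0) := by
    rw [← Nat.sum_div_divisors n (fun d => (moebius (n / d) : ℂ) * (if d ∣ m then ((d : ℕ) : ℂ) else 0))]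
    apply Finset.sum_congr rfl
    intro d hd
    obtain ⟨hdn, hn0⟩ := Nat.mem_divisors.mp hd
    rw [Nat.div_div_self hdn hn0]
  rw [step3]
  apply Finset.sum_congr rfl
  intro d hd
  split <;> simp [mul_assoc]

set_option maxHeartbeats 1000000 in
theorem ramanujanSum_dirichlet_series_in_m (n : ℕ) (hn : 0 < n) (s : ℝ) (hs : 1 < s) :
    ∑' m : ℕ, ramanujanSum n (m + 1) / ((m + 1 : ℕ) : ℂ) ^ (s : ℂ) =
      riemannZeta s * ∑ d ∈ n.divisors, (moebius (n / d) : ℂ) * (d : ℂ) ^ ((1 : ℂ) - (s : ℂ)) := by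
  have hsre : 1 < (s : ℂ).re := by simpa using hs
  have hs0 : (s : ℂ) ≠ 0 := by
    simp only [ne_eq, Complex.ofReal_eq_zero]
    intro h; rw [h] at hsre; simp at hsre; linarith [hsre]
  set f : ℕ → ℕ → ℂ := fun d m =>
    (if d ∣ (m + 1) then (moebius (n / d) : ℂ) * d else 0) / ((m + 1 : ℕ) : ℂ) ^ (s : ℂ) with hf
  have hterm : ∀ m : ℕ, ramanujanSum n (m + 1) / ((m + 1 : ℕ) : ℂ) ^ (s : ℂ)
      = ∑ d ∈ n.divisors, f d m := by
    intro m
    rw [ramanujanSum_eq_sum n hn (m + 1), Finset.sum_div]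
  -- summability of 1/(m+1)^s
  have hsum0 : Summable (fun m : ℕ => 1 / ((m : ℕ) : ℂ) ^ (s : ℂ)) := by
    rw [← summable_norm_iff]
    have : ∀ m : ℕ, ‖1 / ((m : ℕ) : ℂ) ^ (s : ℂ)‖ = 1 / (m : ℝ) ^ s := by
      intro m
      rcases Nat.eq_zero_or_pos m with rfl | hm
      · simp [Complex.zero_cpow hs0, Real.zero_rpow (by linarith : s ≠ 0)]
      · rw [norm_div, norm_one, ← Complex.ofReal_natCast,
          norm_cpow_eq_rpow_re_of_pos (by exact_mod_cast hm)]
        simp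
    simpa [this] using Real.summable_one_div_nat_rpow.mpr hs
  have hsum1 : Summable (fun m : ℕ => 1 / ((m + 1 : ℕ) : ℂ) ^ (s : ℂ)) :=
    (summable_nat_add_iff 1).mpr hsum0
  have hsummable : ∀ d ∈ n.divisors, Summable (f d) := by
    intro d _
    set C : ℝ := ‖(moebius (n / d) : ℂ) * d‖ with hC
    apply Summable.of_norm_bounded (g := fun m => C * ‖1 / ((m + 1 : ℕ) : ℂ) ^ (s : ℂ)‖)
      (hsum1.norm.mul_left C)
    intro m
    have h1 : (if d ∣ m + 1 then ((moebius (n / d) : ℂ)) * d else 0) / ((m + 1 : ℕ) : ℂ) ^ (s : ℂ)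
        = (if d ∣ m + 1 then ((moebius (n / d) : ℂ)) * d else 0) * (1 / ((m + 1 : ℕ) : ℂ) ^ (s : ℂ)) := by
      rw [mul_one_div]
    rw [hf]
    simp only []
    rw [h1, norm_mul]
    apply mul_le_mul_of_nonneg_right _ (norm_nonneg _)
    split
    · exact le_refl _
    · simp [hC]; positivity
  rw [tsum_congr hterm, Summable.tsum_finsetSum hsummable, Finset.mul_sum]
  apply Finset.sum_congr rfl
  intro d hd
  obtain ⟨hdn, hn0⟩ := Nat.mem_divisors.mp hd
  have hd0 : 0 < d := Nat.pos_of_dvd_of_pos hdn hn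
  have hdC : (d : ℂ) ≠ 0 := Nat.cast_ne_zero.mpr hd0.ne'
  set c : ℂ := (moebius (n / d) : ℂ) * d with hc
  set F : ℕ → ℂ := fun k => if d ∣ k then c / ((k : ℕ) : ℂ) ^ (s : ℂ) else 0 with hF
  have hfF : ∀ m : ℕ, f d m = F (m + 1) := by
    intro m
    rw [hf, hF]
    simp only []
    split <;> simp [hc]
  have hstep1 : ∑' m : ℕ, F (m + 1) = ∑' k : ℕ, F k := by
    apply Function.Injective.tsum_eq (add_left_injective 1)
    intro k hk
    rcases Nat.eq_zero_or_pos k with rfl | hk0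
    · exfalso
      apply hk
      simp [hF, Complex.zero_cpow hs0]
    · exact ⟨k - 1, Nat.succ_pred_eq_of_pos hk0⟩
  have hstep2 : ∑' j : ℕ, F (d * j) = ∑' k : ℕ, F k := by
    apply Function.Injective.tsum_eq (fun a b h => by
      exact Nat.eq_of_mul_eq_mul_left hd0 h)
    intro k hk
    have : d ∣ k := by
      by_contra h
      apply hk
      simp [hF, h]
    obtain ⟨j, rfl⟩ := this
    exact ⟨j, rfl⟩
  have hsplit : ∀ j : ℕ, ((d * j : ℕ) : ℂ) ^ (s : ℂ) = (d : ℂ) ^ (s : ℂ) * (j : ℂ) ^ (s : ℂ) := by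
    intro j
    rw [Nat.cast_mul, ← Complex.ofReal_natCast d, ← Complex.ofReal_natCast j,
      ← mul_cpow_ofReal_nonneg (Nat.cast_nonneg d) (Nat.cast_nonneg j)]
  have hFd : ∀ j : ℕ, F (d * j) = (c / (d : ℂ) ^ (s : ℂ)) * (1 / ((j : ℕ) : ℂ) ^ (s : ℂ)) := by
    intro j
    rw [hF]
    simp only [Nat.dvd_mul_right, if_true]
    rw [hsplit j, ← div_div, div_eq_mul_one_div]
  have hzeta : ∑' m : ℕ, f d m = (c / (d : ℂ) ^ (s : ℂ)) * riemannZeta s := by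
    rw [tsum_congr hfF, hstep1, ← hstep2, tsum_congr hFd, tsum_mul_left,
      zeta_eq_tsum_one_div_nat_cpow hsre]
  rw [hzeta]
  have hpow : (d : ℂ) ^ ((1 : ℂ) - (s : ℂ)) = (d : ℂ) / (d : ℂ) ^ (s : ℂ) := by
    rw [Complex.cpow_sub _ _ hdC, Complex.cpow_one]
  rw [hpow, hc]
  ring
end
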